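/- For all real numbers a, b > 0 and all natural numbers m, n: m + n + 2mn + Σ_{i=1}^{m} (2⌊i·a/b⌋ + 1) + Σ_{j=1}^{n} (2⌊j·b/a⌋ + 1) = 2·(N(a,b; am+bn) − 1). (This expresses the ECH index of the orbit set γ₁^m γ₂^n on the boundary of the ellipsoid E(a,b) as twice the number of lattice points in the triangle bounded by the coordinate axes and the line through (m,n) of slope −a/b, minus one.) -/

import Mathlib

noncomputable def latN (a b T : ℝ) : ℕ :=
  Set.ncard {p : ℕ × ℕ | a * p.1 + b * p.2 ≤ T}

lemma latN_finite (a b : ℝ) (ha : 0 < a) (hb : 0 < b) (T : ℝ) :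
    {p : ℕ × ℕ | a * p.1 + b * p.2 ≤ T}.Finite := by
  apply Set.Finite.subset (Set.finite_Iic (⌊T / a⌋₊, ⌊T / b⌋₊))
  rintro ⟨x, y⟩ hp
  simp only [Set.mem_setOf_eq] at hp
  have hx : (x : ℝ) * a ≤ T := by
    have : 0 ≤ b * y := by positivity
    nlinarith
  have hy : (y : ℝ) * b ≤ T := by
    have : 0 ≤ a * x := by positivity
    nlinarith
  constructor
  · exact Nat.le_floor ((le_div_iff₀ ha).2 hx)
  · exact Nat.le_floor ((le_div_iff₀ hb).2 hy)

lemma latN_zero (a b : ℝ) (ha : 0 < a) (hb : 0 < b) : latN a b 0 = 1 := by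
  have : {p : ℕ × ℕ | a * p.1 + b * p.2 ≤ 0} = {(0, 0)} := by
    ext ⟨x, y⟩
    simp only [Set.mem_setOf_eq, Set.mem_singleton_iff, Prod.mk.injEq]
    constructor
    · intro h
      have hx : 0 ≤ a * x := by positivity
      have hy : 0 ≤ b * y := by positivity
      have hx0 : (x : ℝ) = 0 := by
        by_contra hc
        have : 0 < (x : ℝ) := lt_of_le_of_ne (by positivity) (Ne.symm hc)
        nlinarith
      have hy0 : (y : ℝ) = 0 := by
        by_contra hc
        have : 0 < (y : ℝ) := lt_of_le_of_ne (by positivity) (Ne.symm hc)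
        nlinarith
      exact ⟨Nat.cast_injective (R := ℝ) (by simpa using hx0), Nat.cast_injective (R := ℝ) (by simpa using hy0)⟩
    · rintro ⟨rfl, rfl⟩; simp
  rw [latN, this, Set.ncard_singleton]

lemma latN_swap (a b T : ℝ) : latN a b T = latN b a T := by
  unfold latN
  have h : {p : ℕ × ℕ | b * p.1 + a * p.2 ≤ T}
      = Prod.swap '' {p : ℕ × ℕ | a * p.1 + b * p.2 ≤ T} := by
    ext ⟨x, y⟩
    simp only [Set.mem_setOf_eq, Set.mem_image, Prod.exists, Prod.swap_prod_mk,
      Prod.mk.injEq]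
    constructor
    · intro h; exact ⟨y, x, by linarith, rfl, rfl⟩
    · rintro ⟨u, v, h, rfl, rfl⟩; linarith
  rw [h, Set.ncard_image_of_injective _ Prod.swap_injective]

lemma latN_step (a b T : ℝ) (ha : 0 < a) (hb : 0 < b) (hT : 0 ≤ T) :
    latN a b (T + a) = latN a b T + (⌊(T + a) / b⌋₊ + 1) := by
  set S : Set (ℕ × ℕ) := {p : ℕ × ℕ | a * p.1 + b * p.2 ≤ T} with hS
  set S' : Set (ℕ × ℕ) := {p : ℕ × ℕ | a * p.1 + b * p.2 ≤ T + a} with hS'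
  have hsub : S ⊆ S' := by
    rintro ⟨x, y⟩ h
    simp only [hS, hS', Set.mem_setOf_eq] at *
    linarith
  have hfin' : S'.Finite := latN_finite a b ha hb (T + a)
  have key : S' \ S =
      (fun y : ℕ => ((⌊(T + a - b * y) / a⌋).toNat, y)) '' Set.Iic ⌊(T + a) / b⌋₊ := by
    ext ⟨x, y⟩
    constructor
    · rintro ⟨h1, h2⟩
      simp only [hS, hS', Set.mem_setOf_eq] at h1 h2
      push_neg at h2
      have hby : b * y ≤ T + a := by
        have : 0 ≤ a * x := by positivity
        linarith
      have hfl : ⌊(T + a - b * y) / a⌋ = (x : ℤ) := by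
        rw [Int.floor_eq_iff]
        constructor
        · push_cast
          rw [le_div_iff₀ ha]
          linarith
        · push_cast
          rw [div_lt_iff₀ ha]
          linarith
      exact ⟨y, Set.mem_Iic.2 (Nat.le_floor ((le_div_iff₀ hb).2 (by linarith))),
        Prod.ext (by simp [hfl]) rfl⟩
    · rintro ⟨y, hy, heq⟩
      rw [← heq]
      rw [Set.mem_Iic] at hy
      have hby : b * y ≤ T + a := by
        have h1 : (y : ℝ) ≤ (T + a) / b := (Nat.le_floor_iff (by positivity)).1 hy
        rw [le_div_iff₀ hb] at h1
        linarith
      have h0 : (0 : ℤ) ≤ ⌊(T + a - b * y) / a⌋ :=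
        Int.floor_nonneg.2 (div_nonneg (by linarith) ha.le)
      have hz : (((⌊(T + a - b * y) / a⌋.toNat : ℕ)) : ℝ) = ((⌊(T + a - b * y) / a⌋ : ℤ) : ℝ) := by
        exact_mod_cast congrArg (fun z : ℤ => (z : ℝ)) (Int.toNat_of_nonneg h0)
      have hle : ((⌊(T + a - b * y) / a⌋ : ℤ) : ℝ) ≤ (T + a - b * y) / a := Int.floor_le _
      have hgt : (T + a - b * y) / a - 1 < ((⌊(T + a - b * y) / a⌋ : ℤ) : ℝ) :=
        Int.sub_one_lt_floor _
      rw [le_div_iff₀ ha] at hle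
      have hgt' : (T + a - b * y) / a < ((⌊(T + a - b * y) / a⌋ : ℤ) : ℝ) + 1 := by linarith
      rw [div_lt_iff₀ ha] at hgt'
      constructor
      · simp only [hS', Set.mem_setOf_eq]
        rw [hz]
        nlinarith
      · simp only [hS, Set.mem_setOf_eq]
        push_neg
        rw [hz]
        nlinarith
  have hinj : Function.Injective (fun y : ℕ => ((⌊(T + a - b * y) / a⌋).toNat, y)) := by
    intro u v h
    simpa using congrArg Prod.snd h
  have hcard : (S' \ S).ncard = ⌊(T + a) / b⌋₊ + 1 := by
    rw [key, Set.ncard_image_of_injective _ hinj, ← Finset.coe_Iic, Set.ncard_coe_finset,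
      Nat.card_Iic]
  have := Set.ncard_diff_add_ncard_of_subset hsub hfin'
  unfold latN
  rw [← hS, ← hS', ← this, hcard]
  ring

lemma latN_formula (a b : ℝ) (ha : 0 < a) (hb : 0 < b) (m n : ℕ) :
    2 * (latN a b (a * m + b * n) : ℤ)
      = (m : ℤ) + n + 2 * m * n
        + ∑ i ∈ Finset.Icc 1 m, (2 * ⌊(i : ℝ) * a / b⌋ + 1)
        + ∑ j ∈ Finset.Icc 1 n, (2 * ⌊(j : ℝ) * b / a⌋ + 1) + 2 := by
  induction m with
  | zero =>
      induction n with
      | zero => simp [latN_zero a b ha hb]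
      | succ n ihn =>
          have harg : a * (0 : ℕ) + b * ((n + 1 : ℕ) : ℝ) = (a * (0 : ℕ) + b * n) + b := by
            push_cast; ring
          have hstep : latN b a ((a * (0 : ℕ) + b * n) + b)
              = latN b a (a * (0 : ℕ) + b * n) + (⌊((a * (0 : ℕ) + b * n) + b) / a⌋₊ + 1) :=
            latN_step b a _ hb ha (by positivity)
          have hfl : ((⌊((a * (0 : ℕ) + b * n) + b) / a⌋₊ : ℤ))
              = ⌊((n + 1 : ℕ) : ℝ) * b / a⌋ := by
            rw [Int.natCast_floor_eq_floor (by positivity)]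
            congr 1
            push_cast; ring
          have hsum : ∑ j ∈ Finset.Icc 1 (n + 1), (2 * ⌊(j : ℝ) * b / a⌋ + 1)
              = ∑ j ∈ Finset.Icc 1 n, (2 * ⌊(j : ℝ) * b / a⌋ + 1)
                + (2 * ⌊((n + 1 : ℕ) : ℝ) * b / a⌋ + 1) :=
            Finset.sum_Icc_succ_top (Nat.succ_le_succ (Nat.zero_le n)) _
          rw [harg, latN_swap a b, hstep, latN_swap b a, hsum]
          push_cast at ihn hfl ⊢
          linarith [hfl]
  | succ m ihm =>
      have harg : a * ((m + 1 : ℕ) : ℝ) + b * n = (a * m + b * n) + a := by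
        push_cast; ring
      have hstep : latN a b ((a * m + b * n) + a)
          = latN a b (a * m + b * n) + (⌊((a * m + b * n) + a) / b⌋₊ + 1) :=
        latN_step a b _ ha hb (by positivity)
      have hfl : ((⌊((a * m + b * n) + a) / b⌋₊ : ℤ))
          = ⌊((m + 1 : ℕ) : ℝ) * a / b⌋ + n := by
        rw [Int.natCast_floor_eq_floor (by positivity)]
        rw [show ((a * m + b * n) + a) / b = ((m + 1 : ℕ) : ℝ) * a / b + (n : ℤ) by
          push_cast; field_simp; ring]
        exact Int.floor_add_intCast _ _
      have hsum : ∑ i ∈ Finset.Icc 1 (m + 1), (2 * ⌊(i : ℝ) * a / b⌋ + 1)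
          = ∑ i ∈ Finset.Icc 1 m, (2 * ⌊(i : ℝ) * a / b⌋ + 1)
            + (2 * ⌊((m + 1 : ℕ) : ℝ) * a / b⌋ + 1) :=
        Finset.sum_Icc_succ_top (Nat.succ_le_succ (Nat.zero_le m)) _
      rw [harg, hstep, hsum]
      push_cast at ihm hfl ⊢
      linarith [hfl]

theorem ech_index_ellipsoid_lattice_count (a b : ℝ) (ha : 0 < a) (hb : 0 < b) (m n : ℕ) :
    (m : ℤ) + n + 2 * m * n
        + ∑ i ∈ Finset.Icc 1 m, (2 * ⌊(i : ℝ) * a / b⌋ + 1)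
        + ∑ j ∈ Finset.Icc 1 n, (2 * ⌊(j : ℝ) * b / a⌋ + 1)
      = 2 * ((latN a b (a * m + b * n) : ℤ) - 1) := by
  have := latN_formula a b ha hb m n
  linarith
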